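/- In the welfare-maximizing auction for value maximizers (iterated max: first maximize the highest bidder's value over outcomes, then among those outcomes maximize the second-highest value, and so on), with externality payments, truthful reporting is optimal for every simple value maximizer whenever all transformed values are distinct across bidders and outcomes: no bidder can, by misreporting, obtain an outcome she strictly prefers (higher value at an individually rational price, or equal value at a strictly lower price). -/

import Mathlib

open scoped NNReal
open Finset

variable {O : Type*} [Fintype O] [DecidableEq O] {n : ℕ}

/-- The values of bidders in `s` for outcome `o`, sorted in descending order. -/
noncomputable def sortedValsOn (s : Finset (Fin n)) (b : Fin n → O → ℝ≥0) (o : O) :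
    List ℝ≥0 :=
  ((s.val.map (fun i => b i o)).sort (· ≤ ·)).reverse

/-- `o*` is an outcome of the iterated-max welfare mechanism run on the bidders
in `s`: it first maximizes the highest bidder value, then among such outcomes
the second-highest, and so on; equivalently, its descending sorted value vector
is lexicographically maximal. -/
def IsIterMaxOn (s : Finset (Fin n)) (b : Fin n → O → ℝ≥0) (ostar : O) : Prop :=
  ∀ o : O, sortedValsOn s b o = sortedValsOn s b ostar ∨
    List.Lex (· < ·) (sortedValsOn s b o) (sortedValsOn s b ostar)

/-- No ties: all values are distinct across (bidder, outcome) pairs. -/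
def DistinctVals (b : Fin n → O → ℝ≥0) : Prop :=
  ∀ (i j : Fin n) (o₁ o₂ : O), (i, o₁) ≠ (j, o₂) → b i o₁ ≠ b j o₂


section AuxLemmas
set_option linter.unusedSectionVars false

lemma mem_sortedValsOn {s : Finset (Fin n)} {b : Fin n → O → ℝ≥0} {o : O} {x : ℝ≥0} :
    x ∈ sortedValsOn s b o ↔ ∃ j ∈ s, b j o = x := by
  simp [sortedValsOn, Multiset.mem_sort, Multiset.mem_map]

lemma sortedValsOn_congr {s : Finset (Fin n)} {b b' : Fin n → O → ℝ≥0}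
    (h : ∀ j ∈ s, b j = b' j) : sortedValsOn s b = sortedValsOn s b' := by
  funext o
  unfold sortedValsOn
  congr 2
  exact Multiset.map_congr rfl (fun j hj => by rw [h j hj])

lemma sortedValsOn_cons_sup {s : Finset (Fin n)} (hs : s.Nonempty) (b : Fin n → O → ℝ≥0)
    (o : O) : ∃ l, sortedValsOn s b o = (s.sup fun j => b j o) :: l := by
  obtain ⟨j0, hj0, hsup⟩ := s.exists_mem_eq_sup hs (fun j => b j o)
  have hmem : (s.sup fun j => b j o) ∈ sortedValsOn s b o :=
    mem_sortedValsOn.2 ⟨j0, hj0, hsup.symm⟩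
  cases h : sortedValsOn s b o with
  | nil => rw [h] at hmem; simp at hmem
  | cons a l =>
    have hsorted : (sortedValsOn s b o).Pairwise (fun x y => y ≤ x) :=
      List.pairwise_reverse.2 (Multiset.pairwise_sort _ _)
    rw [h] at hsorted hmem
    have ha : a ≤ s.sup fun j => b j o := by
      obtain ⟨j, hj, hja⟩ := mem_sortedValsOn.1 (show a ∈ sortedValsOn s b o by
        rw [h]; exact List.mem_cons_self)
      exact hja ▸ Finset.le_sup (f := fun j => b j o) hj
    have hae : a = s.sup fun j => b j o := by
      rcases List.mem_cons.1 hmem with he | hl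
      · exact he.symm
      · exact le_antisymm ha ((List.pairwise_cons.1 hsorted).1 _ hl)
    exact ⟨l, by rw [← hae]⟩

lemma lex_cons_le {x y : ℝ≥0} {l₁ l₂ : List ℝ≥0}
    (h : List.Lex (· < ·) (x :: l₁) (y :: l₂)) : x ≤ y := by
  cases h with
  | cons _ => exact le_rfl
  | rel h => exact h.le

lemma sup_le_of_iterMax {s : Finset (Fin n)} {b : Fin n → O → ℝ≥0} {ostar : O}
    (h : IsIterMaxOn s b ostar) (o : O) :
    (s.sup fun j => b j o) ≤ s.sup fun j => b j ostar := by
  rcases s.eq_empty_or_nonempty with rfl | hs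
  · simp
  obtain ⟨l1, h1⟩ := sortedValsOn_cons_sup hs b o
  obtain ⟨l2, h2⟩ := sortedValsOn_cons_sup hs b ostar
  rcases h o with heq | hlex
  · rw [h1, h2] at heq
    exact le_of_eq (List.cons_eq_cons.mp heq).1
  · rw [h1, h2] at hlex
    exact lex_cons_le hlex

lemma lex_asymm : ∀ {l₁ l₂ : List ℝ≥0},
    List.Lex (· < ·) l₁ l₂ → List.Lex (· < ·) l₂ l₁ → False := by
  intro l₁ l₂ h
  induction h with
  | nil => intro h2; cases h2
  | @cons a l1 l2 _ ih =>
    intro h2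
    cases h2 with
    | cons h' => exact ih h'
    | rel h' => exact lt_irrefl _ h'
  | @rel a l1 bb l2 h =>
    intro h2
    cases h2 with
    | cons _ => exact lt_irrefl _ h
    | rel h' => exact lt_asymm h h'

lemma outcome_eq_of_sortedValsOn_eq {s : Finset (Fin n)} {b : Fin n → O → ℝ≥0}
    (hd : DistinctVals b) (hs : s.Nonempty) {o₁ o₂ : O}
    (h : sortedValsOn s b o₁ = sortedValsOn s b o₂) : o₁ = o₂ := by
  by_contra hne
  have hm : s.val.map (fun j => b j o₁) = s.val.map (fun j => b j o₂) := by
    have h' := congrArg List.reverse h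
    simp only [sortedValsOn, List.reverse_reverse] at h'
    rw [← Multiset.sort_eq (α := ℝ≥0) (s.val.map fun j => b j o₁) (· ≤ ·),
        ← Multiset.sort_eq (α := ℝ≥0) (s.val.map fun j => b j o₂) (· ≤ ·), h']
  obtain ⟨j, hj⟩ := hs
  have : b j o₁ ∈ s.val.map (fun j => b j o₂) := by
    rw [← hm]; exact Multiset.mem_map_of_mem _ hj
  obtain ⟨k, hk, hbk⟩ := Multiset.mem_map.1 this
  exact hd k j o₂ o₁ (fun hp => hne ((congrArg Prod.snd hp).symm)) hbk

lemma iterMax_outcome_eq {s : Finset (Fin n)} {b : Fin n → O → ℝ≥0}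
    (hd : DistinctVals b) (hs : s.Nonempty) {o₁ o₂ : O}
    (h₁ : IsIterMaxOn s b o₁) (h₂ : IsIterMaxOn s b o₂) : o₁ = o₂ := by
  rcases h₁ o₂ with he | hl
  · exact (outcome_eq_of_sortedValsOn_eq hd hs he).symm
  rcases h₂ o₁ with he | hl'
  · exact outcome_eq_of_sortedValsOn_eq hd hs he
  exact (lex_asymm hl hl').elim

end AuxLemmas

/-- Bidder `i`'s externality payment: among the bidders whose value changes when
`i` is removed, the largest value obtained when `i` is absent (`0` if the
outcome is unaffected). Here `g s b` is the outcome the mechanism selects for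
the bidders in `s` under profile `b`. -/
noncomputable def extPay (g : Finset (Fin n) → (Fin n → O → ℝ≥0) → O)
    (b : Fin n → O → ℝ≥0) (i : Fin n) : ℝ≥0 :=
  ((univ.erase i).filter
      (fun j => b j (g (univ.erase i) b) ≠ b j (g univ b))).sup
    (fun j => b j (g (univ.erase i) b))

/-- the iterated-max welfare mechanism with externality payments is
truthful for simple value maximizers whenever no ties occur: no bidder can, by
misreporting, obtain an outcome of strictly higher value to her at an
individually rational payment, nor an outcome of equal value at a strictly
lower payment. -/
theorem iterMax_welfare_truthful_for_value_maximizers [Nonempty O]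
    (g : Finset (Fin n) → (Fin n → O → ℝ≥0) → O)
    (hg : ∀ (s : Finset (Fin n)) (b : Fin n → O → ℝ≥0), IsIterMaxOn s b (g s b))
    (i : Fin n) (v b : Fin n → O → ℝ≥0)
    (htruth_distinct : DistinctVals (Function.update b i (v i)))
    (hdev_distinct : DistinctVals b) :
    ¬ ((v i (g univ b) > v i (g univ (Function.update b i (v i))) ∧
          extPay g b i ≤ v i (g univ b)) ∨
       (v i (g univ b) = v i (g univ (Function.update b i (v i))) ∧
          extPay g b i < extPay g (Function.update b i (v i)) i)) := by
  intro h
  simp only [extPay] at h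
  set t := Function.update b i (v i) with ht
  set ob := g univ b with hob'
  set ot := g univ t with hot'
  set o' := g (univ.erase i) b with ho''
  set o'' := g (univ.erase i) t with ho'''
  have hti : ∀ o, t i o = v i o := fun o => by rw [ht, Function.update_self]
  have htj : ∀ j, j ≠ i → t j = b j := fun j hj => Function.update_of_ne hj _ _
  -- sortedVals over erase i agree for b and t
  have hsv : sortedValsOn (univ.erase i) b = sortedValsOn (univ.erase i) t :=
    sortedValsOn_congr (fun j hj => (htj j (Finset.ne_of_mem_erase hj)).symm)
  have hIter'' : IsIterMaxOn (univ.erase i) b o'' := by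
    unfold IsIterMaxOn; rw [hsv]; exact hg (univ.erase i) t
  have hcsup : ∀ o, (univ.erase i).sup (fun j => t j o) = (univ.erase i).sup (fun j => b j o) :=
    fun o => Finset.sup_congr rfl (fun j hj => by rw [htj j (Finset.ne_of_mem_erase hj)])
  have hsplit : ∀ o, univ.sup (fun j => t j o) ≤ t i o ⊔ (univ.erase i).sup (fun j => t j o) :=
    fun o => Finset.sup_le (fun j _ => by
      rcases eq_or_ne j i with rfl | hne
      · exact le_sup_left
      · exact le_trans (Finset.le_sup (f := fun k => t k o)
          (Finset.mem_erase.2 ⟨hne, Finset.mem_univ j⟩)) le_sup_right)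
  rcases h with ⟨hgt, hpay⟩ | ⟨heq, hlt⟩
  · -- deviation got strictly higher value: show payment exceeds v i ob
    -- Step A: v i ob ≤ sup over univ of t at ot
    have hA : v i ob ≤ univ.sup (fun j => t j ot) :=
      le_trans (le_trans (le_of_eq (hti ob).symm)
          (Finset.le_sup (f := fun j => t j ob) (Finset.mem_univ i)))
        (sup_le_of_iterMax (hg univ t) ob)
    -- Step B: hence the erased sup at ot is already ≥ v i ob
    have hB : v i ob ≤ (univ.erase i).sup (fun j => b j ot) := by
      rcases le_sup_iff.1 (le_trans hA (hsplit ot)) with hle | hle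
      · rw [hti] at hle; exact absurd hgt (not_lt.2 hle)
      · rw [← hcsup]; exact hle
    -- Step C: erased sup at o' is ≥ v i ob
    have hC : v i ob ≤ (univ.erase i).sup (fun j => b j o') :=
      le_trans hB (sup_le_of_iterMax (hg (univ.erase i) b) ot)
    rcases (univ.erase i).eq_empty_or_nonempty with he | hne
    · rw [he, Finset.sup_empty] at hC
      have : v i ob = 0 := le_antisymm hC zero_le
      rw [this] at hgt
      exact (not_lt.2 zero_le) hgt
    obtain ⟨j₀, hj₀, hj0sup⟩ := (univ.erase i).exists_mem_eq_sup hne (fun j => b j o')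
    have hj₀i : j₀ ≠ i := Finset.ne_of_mem_erase hj₀
    have hEgt : v i ob < b j₀ o' := by
      refine lt_of_le_of_ne (hj0sup ▸ hC) (fun hcontra => ?_)
      refine htruth_distinct i j₀ ob o' (fun hp => hj₀i (congrArg Prod.fst hp).symm) ?_
      rw [hti, htj j₀ hj₀i, hcontra]
    by_cases hoo : o' = ob
    · -- unaffected case: show ot = ob, contradicting hgt
      have hob_le : (univ.erase i).sup (fun j => b j ob) ≤ univ.sup (fun j => t j ot) := by
        refine le_trans ?_ (sup_le_of_iterMax (hg univ t) ob)
        rw [← hcsup]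
        exact Finset.sup_mono (Finset.erase_subset i univ)
      have hcc : (univ.erase i).sup (fun j => b j o') ≤ (univ.erase i).sup (fun j => b j ot) := by
        have hob_le' : (univ.erase i).sup (fun j => b j o') ≤ univ.sup (fun j => t j ot) := by
          rw [hoo]; exact hob_le
        rcases le_sup_iff.1 (le_trans hob_le' (hsplit ot)) with hle | hle
        · exfalso
          have h1 : v i ob < (univ.erase i).sup (fun j => b j o') := by
            rw [hj0sup]; exact hEgt
          have h2 : t i ot < v i ob := by rw [hti]; exact hgt
          exact lt_irrefl _ (lt_trans (lt_of_lt_of_le h1 hle) h2)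
        · rw [hcsup] at hle; exact hle
      have hcc' : (univ.erase i).sup (fun j => b j ot) = (univ.erase i).sup (fun j => b j o') :=
        le_antisymm (sup_le_of_iterMax (hg (univ.erase i) b) ot) hcc
      obtain ⟨j₁, hj₁, hj1sup⟩ := (univ.erase i).exists_mem_eq_sup hne (fun j => b j ot)
      have hval : b j₁ ot = b j₀ o' := by rw [← hj1sup, hcc', hj0sup]
      have hoteq : ot = o' := by
        by_contra hne2
        exact hdev_distinct j₁ j₀ ot o' (fun hp => hne2 (congrArg Prod.snd hp)) hval
      rw [hoteq, hoo] at hgt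
      exact lt_irrefl _ hgt
    · -- affected case: j₀ is in the filter, payment too high
      have hfilt : j₀ ∈ (univ.erase i).filter (fun j => b j o' ≠ b j ob) :=
        Finset.mem_filter.2 ⟨hj₀,
          hdev_distinct j₀ j₀ o' ob (fun hp => hoo (congrArg Prod.snd hp))⟩
      have : b j₀ o' ≤ v i ob :=
        le_trans (Finset.le_sup (f := fun j => b j o') hfilt) hpay
      exact absurd hEgt (not_lt.2 this)
  · -- equal value case: outcomes coincide and payments are equal
    have hob : ob = ot := by
      by_contra hne
      exact htruth_distinct i i ob ot (fun hp => hne (congrArg Prod.snd hp))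
        (by rw [hti, hti]; exact heq)
    rcases (univ.erase i).eq_empty_or_nonempty with he | hne
    · rw [he] at hlt
      simp only [Finset.filter_empty, Finset.sup_empty] at hlt
      exact lt_irrefl _ hlt
    have ho : o' = o'' := iterMax_outcome_eq hdev_distinct hne (hg (univ.erase i) b) hIter''
    have hEq : ((univ.erase i).filter (fun j => b j o' ≠ b j ob)).sup (fun j => b j o')
        = ((univ.erase i).filter (fun j => t j o'' ≠ t j ot)).sup (fun j => t j o'') := by
      rw [← ho, ← hob]
      refine Finset.sup_congr ?_ ?_
      · refine Finset.filter_congr (fun j hj => ?_)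
        rw [htj j (Finset.ne_of_mem_erase hj)]
      · intro j hj
        rw [htj j (Finset.ne_of_mem_erase (Finset.mem_of_mem_filter j hj))]
    rw [hEq] at hlt
    exact lt_irrefl _ hlt
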